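/- For all integers s ≥ 1 and k ≥ 1, the determinant Δ_{s,k} of the s×s real matrix with entries 1/((i + j + k − 2)(i + j + k − 1)) for 1 ≤ i, j ≤ s is strictly positive. -/

import Mathlib

open Matrix MeasureTheory Set Function

open intervalIntegral in
lemma beta_int (a : ℕ) :
    (∫ t in (0:ℝ)..1, t ^ a * (1 - t)) = 1 / (((a:ℝ) + 1) * ((a:ℝ) + 2)) := by
  have h : ∀ t : ℝ, t ^ a * (1 - t) = t ^ a - t ^ (a + 1) := by
    intro t; ring
  simp only [h]
  rw [intervalIntegral.integral_sub (intervalIntegral.intervalIntegrable_pow a)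
    (intervalIntegral.intervalIntegrable_pow (a+1)), integral_pow, integral_pow]
  have h1 : (a:ℝ) + 1 ≠ 0 := by positivity
  have h2 : (a:ℝ) + 2 ≠ 0 := by positivity
  rw [one_pow, one_pow, zero_pow (Nat.succ_ne_zero a), zero_pow (Nat.succ_ne_zero (a+1))]
  push_cast
  have h3 : ((a:ℝ) + 1 + 1) = (a:ℝ) + 2 := by ring
  rw [h3, div_sub_div _ _ h1 h2, div_eq_div_iff (mul_ne_zero h1 h2) (mul_ne_zero h1 h2)]
  ring

theorem stmt6 (s k : ℕ) (hs : 1 ≤ s) (hk : 1 ≤ k) :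
    0 < (Matrix.of fun i j : Fin s =>
      (1 : ℝ) / (((i.val + j.val + k : ℕ) : ℝ) * ((i.val + j.val + k + 1 : ℕ) : ℝ))).det := by
  obtain ⟨m, rfl⟩ : ∃ m, k = m + 1 := ⟨k - 1, (Nat.succ_pred_eq_of_pos hk).symm⟩
  set M : Matrix (Fin s) (Fin s) ℝ := Matrix.of fun i j : Fin s =>
      (1 : ℝ) / (((i.val + j.val + (m+1) : ℕ) : ℝ) * ((i.val + j.val + (m+1) + 1 : ℕ) : ℝ)) with hMdef
  have hM : ∀ i j : Fin s, M i j = ∫ t in (0:ℝ)..1, t ^ (i.val + j.val + m) * (1 - t) := by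
    intro i j
    rw [beta_int]
    show (1 : ℝ) / _ = _
    push_cast
    ring_nf
  have hpd : M.PosDef := by
    refine Matrix.posDef_iff_dotProduct_mulVec.mpr ⟨?_, ?_⟩
    · ext i j
      show star (M j i) = M i j
      rw [hM, hM, star_trivial, Nat.add_comm j.val i.val]
    · intro x hx
      have hStar : star x = x := by simp
      rw [hStar]
      -- the polynomial
      set p : Polynomial ℝ := ∑ i : Fin s, Polynomial.C (x i) * Polynomial.X ^ (i.val) with hp
      have hpeval : ∀ t : ℝ, p.eval t = ∑ i : Fin s, x i * t ^ (i.val) := by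
        intro t; simp [hp, Polynomial.eval_finset_sum]
      have hpne : p ≠ 0 := by
        obtain ⟨i, hi⟩ := Function.ne_iff.mp hx
        intro h0
        apply hi
        have : p.coeff i.val = x i := by
          simp only [hp, Polynomial.finset_sum_coeff, Polynomial.coeff_C_mul,
            Polynomial.coeff_X_pow]
          rw [Finset.sum_eq_single i]
          · simp
          · intro j _ hji
            rw [if_neg (show ¬(i.val = j.val) from fun h => hji (Fin.val_injective h.symm))]
            ring
          · simp
        rw [h0] at this
        simpa using this.symm
      -- the integrand
      set f : ℝ → ℝ := fun t => (p.eval t) ^ 2 * (t ^ m * (1 - t)) with hf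
      have hfc : Continuous f := by
        apply Continuous.mul
        · exact (Polynomial.continuous p).pow 2
        · exact ((continuous_pow m).mul (continuous_const.sub continuous_id))
      have key : x ⬝ᵥ M *ᵥ x = ∫ t in (0:ℝ)..1, f t := by
        have step1 : ∀ i j : Fin s, x i * (M i j * x j)
            = ∫ t in (0:ℝ)..1, (x i * x j) * (t ^ (i.val + j.val + m) * (1 - t)) := by
          intro i j
          rw [intervalIntegral.integral_const_mul, ← hM i j]; ring
        have step2 : ∀ i : Fin s, (∑ j : Fin s, ∫ t in (0:ℝ)..1,
            (x i * x j) * (t ^ (i.val + j.val + m) * (1 - t)))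
            = ∫ t in (0:ℝ)..1, ∑ j : Fin s, (x i * x j) * (t ^ (i.val + j.val + m) * (1 - t)) := by
          intro i
          rw [intervalIntegral.integral_finset_sum]
          intro j _
          apply Continuous.intervalIntegrable
          continuity
        calc x ⬝ᵥ M *ᵥ x = ∑ i : Fin s, ∑ j : Fin s, x i * (M i j * x j) := by
              simp [dotProduct, mulVec, Finset.mul_sum]
          _ = ∑ i : Fin s, ∫ t in (0:ℝ)..1, ∑ j : Fin s,
                (x i * x j) * (t ^ (i.val + j.val + m) * (1 - t)) := by
              refine Finset.sum_congr rfl fun i _ => ?_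
              rw [← step2]
              exact Finset.sum_congr rfl fun j _ => step1 i j
          _ = ∫ t in (0:ℝ)..1, ∑ i : Fin s, ∑ j : Fin s,
                (x i * x j) * (t ^ (i.val + j.val + m) * (1 - t)) := by
              rw [intervalIntegral.integral_finset_sum]
              intro i _
              apply Continuous.intervalIntegrable
              apply continuous_finset_sum
              intro j _
              continuity
          _ = ∫ t in (0:ℝ)..1, f t := by
              refine intervalIntegral.integral_congr fun t _ => ?_
              show _ = (p.eval t) ^ 2 * (t ^ m * (1 - t))
              rw [hpeval t, sq, Finset.sum_mul_sum, Finset.sum_mul]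
              refine Finset.sum_congr rfl fun i _ => ?_
              rw [Finset.sum_mul]
              refine Finset.sum_congr rfl fun j _ => ?_
              rw [pow_add, pow_add]
              ring
      rw [key]
      -- positivity of the integral
      have hnn : 0 ≤ᵐ[volume.restrict (Set.uIoc (0:ℝ) 1)] f := by
        rw [uIoc_of_le (by norm_num : (0:ℝ) ≤ 1)]
        refine (ae_restrict_iff' measurableSet_Ioc).2 (ae_of_all _ fun t ht => ?_)
        have h1 : 0 < t := ht.1
        have h2 : t ≤ 1 := ht.2
        have : 0 ≤ 1 - t := by linarith
        positivity
      have hfi : IntervalIntegrable f volume 0 1 := hfc.intervalIntegrable _ _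
      rw [intervalIntegral.integral_pos_iff_support_of_nonneg_ae' hnn hfi]
      refine ⟨by norm_num, ?_⟩
      have hroots : (setOf p.IsRoot).Finite := p.finite_setOf_isRoot hpne
      have hsub : Ioo (0:ℝ) 1 \ setOf p.IsRoot ⊆ support f ∩ Ioc 0 1 := by
        rintro t ⟨⟨ht0, ht1⟩, hroot⟩
        refine ⟨?_, ht0, ht1.le⟩
        have hpt : p.eval t ≠ 0 := hroot
        have : 0 < f t := by
          rw [hf]
          have h3 : (0:ℝ) < 1 - t := by linarith
          positivity
        exact this.ne'
      refine lt_of_lt_of_le ?_ (measure_mono hsub)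
      rw [measure_diff_null (hroots.measure_zero _)]
      simp [Real.volume_Ioo]
  have := hpd.det_pos
  exact this
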